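/- arXiv:hep-ph/9710236 — 3 statements merged into one kernel-verified Lean document; each statement's English description precedes it below -/
import Mathlib

section
/- Let a, b ∈ ℂ with |a|² + |b|² = 1, δ ∈ ℝ, x ∈ ℝ, and write a = cos ω·e^{i(δ+γ)}, b = sin ω·e^{i(ρ−γ)} for real ω, γ, ρ. Then |2a·conj(b) + ix(e^{−iδ}a² + e^{iδ}conj(b)²)|² = (sin 2ω − x cos 2ω sin ρ)² + x² cos² ρ. -/
open Complex

theorem stmt_11 (x δ ω γ ρ : ℝ) (a b : ℂ)
    (ha : a = (Real.cos ω : ℂ) * Complex.exp (Complex.I * (δ + γ)))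
    (hb : b = (Real.sin ω : ℂ) * Complex.exp (Complex.I * (ρ - γ)))
    (hab : ‖a‖ ^ 2 + ‖b‖ ^ 2 = 1) :
    ‖2 * a * (starRingEnd ℂ) b + Complex.I * (x : ℂ) *
        (Complex.exp (-(Complex.I * δ)) * a ^ 2 +
          Complex.exp (Complex.I * δ) * ((starRingEnd ℂ) b) ^ 2)‖ ^ 2 =
      (Real.sin (2 * ω) - x * Real.cos (2 * ω) * Real.sin ρ) ^ 2 +
        x ^ 2 * Real.cos ρ ^ 2 := by
  have hωC : Complex.sin (ω : ℂ) ^ 2 + Complex.cos (ω : ℂ) ^ 2 = 1 :=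
    Complex.sin_sq_add_cos_sq _
  have hρC : Complex.cos (ρ : ℂ) ^ 2 + Complex.sin (ρ : ℂ) ^ 2 = 1 :=
    Complex.cos_sq_add_sin_sq _
  have e2 : Complex.exp (-(Complex.I * δ)) * Complex.exp (Complex.I * δ) = 1 := by
    rw [← Complex.exp_add, neg_add_cancel, Complex.exp_zero]
  have e1 : Complex.exp (Complex.I * ((δ : ℂ) + γ)) =
      Complex.exp (Complex.I * δ) * Complex.exp (Complex.I * γ) := by
    rw [← Complex.exp_add]; ring_nf
  have eρ' : Complex.exp (-(Complex.I * ρ)) =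
      (Real.cos ρ : ℂ) - (Real.sin ρ : ℂ) * Complex.I := by
    have h : -(Complex.I * (ρ : ℂ)) = ((-ρ : ℝ) : ℂ) * Complex.I := by push_cast; ring
    rw [h, Complex.exp_mul_I, ← Complex.ofReal_cos, ← Complex.ofReal_sin,
      Real.cos_neg, Real.sin_neg]
    push_cast; ring
  have hcb : (starRingEnd ℂ) (Complex.exp (Complex.I * ((ρ : ℂ) - γ))) =
      Complex.exp (-(Complex.I * ρ)) * Complex.exp (Complex.I * γ) := by
    rw [← Complex.exp_conj, ← Complex.exp_add]
    congr 1
    simp only [map_mul, Complex.conj_I, map_sub, Complex.conj_ofReal]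
    ring
  have key : 2 * a * (starRingEnd ℂ) b + Complex.I * (x : ℂ) *
        (Complex.exp (-(Complex.I * δ)) * a ^ 2 +
          Complex.exp (Complex.I * δ) * ((starRingEnd ℂ) b) ^ 2)
      = Complex.exp (Complex.I * δ) * Complex.exp (Complex.I * γ) ^ 2 *
          ((Real.cos ρ : ℂ) - (Real.sin ρ : ℂ) * Complex.I) *
          (((Real.sin (2 * ω) - x * Real.cos (2 * ω) * Real.sin ρ : ℝ) : ℂ) +
            ((x * Real.cos ρ : ℝ) : ℂ) * Complex.I) := by
    subst ha hb
    rw [map_mul, Complex.conj_ofReal, hcb, eρ', e1]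
    rw [Real.sin_two_mul, Real.cos_two_mul]
    push_cast
    linear_combination
      Complex.exp (Complex.I * δ) * Complex.exp (Complex.I * γ) ^ 2 *
          (2 * x * Complex.cos (ρ : ℂ) * Complex.sin (ρ : ℂ)) * hωC -
        Complex.I * x * Complex.cos (ω : ℂ) ^ 2 * Complex.exp (Complex.I * δ) *
          Complex.exp (Complex.I * γ) ^ 2 * hρC +
        Complex.I * x * Complex.cos (ω : ℂ) ^ 2 * Complex.exp (Complex.I * δ) *
          Complex.exp (Complex.I * γ) ^ 2 * e2 +
        Complex.exp (Complex.I * δ) * Complex.exp (Complex.I * γ) ^ 2 * x *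
          (Complex.cos (ρ : ℂ) * Complex.sin (ρ : ℂ) * (1 - 2 * Complex.sin (ω : ℂ) ^ 2) +
            Complex.I * Complex.sin (ω : ℂ) ^ 2 * Complex.sin (ρ : ℂ) ^ 2) * Complex.I_sq +
        Complex.exp (Complex.I * δ) * Complex.exp (Complex.I * γ) ^ 2 * x * Complex.I *
          (Complex.cos (ρ : ℂ) ^ 2 - Complex.sin (ρ : ℂ) ^ 2) * hωC
  have n1 : ‖Complex.exp (Complex.I * (δ : ℂ))‖ = 1 := by
    simp [Complex.norm_exp]
  have n2 : ‖Complex.exp (Complex.I * (γ : ℂ))‖ = 1 := by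
    simp [Complex.norm_exp]
  have n3 : ‖(Real.cos ρ : ℂ) - (Real.sin ρ : ℂ) * Complex.I‖ ^ 2 = 1 := by
    have h : (Real.cos ρ : ℂ) - (Real.sin ρ : ℂ) * Complex.I =
        ((Real.cos ρ : ℝ) : ℂ) + ((-Real.sin ρ : ℝ) : ℂ) * Complex.I := by push_cast; ring
    rw [Complex.sq_norm, h, Complex.normSq_add_mul_I]
    linear_combination Real.cos_sq_add_sin_sq ρ
  rw [key, norm_mul, norm_mul, norm_mul, norm_pow, n1, n2, one_mul, one_pow, one_mul,
    mul_pow, n3, one_mul, Complex.sq_norm, Complex.normSq_add_mul_I]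
  ring
end

section
/- Under the assumptions y = 0, S unitary, and |p/q| = 1 (p/q = e^{iδ}), the like-sign dilepton event numbers are equal: N₊₊ = N₋₋, where N₊₊ = (B²/(2Γ))|p/q|² I₋ + ζB² |∫₀^∞ T₁₁*(t)T₁₂(t)dt|² and N₋₋ = (B²/(2Γ))|q/p|² I₋ + ζB² |∫₀^∞ T₂₂*(t)T₂₁(t)dt|² (using |det S| = 1). -/
open MeasureTheory Matrix Complex

theorem stmt_14 (mH mL Γ : ℝ) (hΓ : 0 < Γ) (δ : ℝ)
    (p q : ℂ) (hq : q ≠ 0) (hpq : p = Complex.exp (Complex.I * δ) * q)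
    (hnorm : ‖p‖ ^ 2 + ‖q‖ ^ 2 = 1)
    (gH gL gm : ℝ → ℂ)
    (hgH : ∀ t, gH t = Complex.exp (-(Complex.I * mH + Γ / 2) * t))
    (hgL : ∀ t, gL t = Complex.exp (-(Complex.I * mL + Γ / 2) * t))
    (hgm : ∀ t, gm t = (gH t - gL t) / 2)
    (S M : Matrix (Fin 2) (Fin 2) ℂ)
    (hS : S * S.conjTranspose = 1)
    (hM : M = !![p, p; q, -q])
    (T : ℝ → Matrix (Fin 2) (Fin 2) ℂ)
    (hT : ∀ t, T t = M * Matrix.diagonal ![gH t, gL t] * M⁻¹ * S)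
    (B ζ Im : ℝ) (hB : 0 < B)
    (hIm : Im = ∫ t in Set.Ioi (0 : ℝ), ‖gm t‖ ^ 2)
    (Npp Nmm : ℝ)
    (hNpp : Npp = B ^ 2 / (2 * Γ) * ‖p / q‖ ^ 2 * Im +
      ζ * B ^ 2 *
        ‖∫ t in Set.Ioi (0 : ℝ), (starRingEnd ℂ) (T t 0 0) * T t 0 1‖ ^ 2)
    (hNmm : Nmm = B ^ 2 / (2 * Γ) * ‖q / p‖ ^ 2 * Im +
      ζ * B ^ 2 *
        ‖∫ t in Set.Ioi (0 : ℝ), (starRingEnd ℂ) (T t 1 1) * T t 1 0‖ ^ 2) :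
    Npp = Nmm := by
  set α : ℂ := Complex.exp (Complex.I * δ) with hαdef
  have hnα : ‖α‖ = 1 := by
    rw [hαdef, Complex.norm_exp]
    simp [Complex.mul_re]
  have hα0 : α ≠ 0 := Complex.exp_ne_zero _
  have hp : p ≠ 0 := by rw [hpq]; exact mul_ne_zero hα0 hq
  have hα : (starRingEnd ℂ) α * α = 1 := by
    rw [Complex.conj_mul', hnα]
    norm_num
  have hpq1 : ‖p / q‖ = 1 := by
    rw [hpq, mul_div_assoc, div_self hq, mul_one, hnα]
  have hqp1 : ‖q / p‖ = 1 := by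
    rw [norm_div, hpq, norm_mul, hnα, one_mul, div_self (norm_ne_zero_iff.mpr hq)]
  -- unitarity column relation
  have hS' : S.conjTranspose * S = 1 := mul_eq_one_comm.mp hS
  have hu : (starRingEnd ℂ) (S 0 0) * S 0 1 + (starRingEnd ℂ) (S 1 0) * S 1 1 = 0 := by
    have := congrFun (congrFun hS' 0) 1
    simpa [Matrix.mul_apply, Fin.sum_univ_two, Matrix.conjTranspose_apply,
      Matrix.one_apply] using this
  -- |gH| = |gL| pointwise
  have hg : ∀ t : ℝ, (starRingEnd ℂ) (gH t) * gH t = (starRingEnd ℂ) (gL t) * gL t := by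
    intro t
    rw [hgH, hgL, ← Complex.exp_conj, ← Complex.exp_add, ← Complex.exp_conj,
      ← Complex.exp_add]
    congr 1
    simp only [_root_.map_mul, map_neg, _root_.map_add, Complex.conj_I, Complex.conj_ofReal,
      map_div₀, map_ofNat]
    ring
  -- explicit inverse of M
  have hMinv : M⁻¹ = !![1/(2*p), 1/(2*q); 1/(2*p), -(1/(2*q))] := by
    apply Matrix.inv_eq_right_inv
    rw [hM, Matrix.mul_fin_two, Matrix.one_fin_two]
    ext i j
    fin_cases i <;> fin_cases j <;> simp <;> field_simp <;> ring
  have hP : ∀ t, M * Matrix.diagonal ![gH t, gL t] * M⁻¹ =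
      !![(gH t + gL t)/2, α * gm t; (starRingEnd ℂ) α * gm t, (gH t + gL t)/2] := by
    intro t
    rw [hMinv, hM, hgm,
      show (Matrix.diagonal ![gH t, gL t]) = !![gH t, 0; 0, gL t] by
        ext i j; fin_cases i <;> fin_cases j <;> simp [Matrix.diagonal_apply],
      Matrix.mul_fin_two, Matrix.mul_fin_two]
    ext i j
    fin_cases i <;> fin_cases j <;> simp
    · rw [hpq]; field_simp
    · rw [hpq]; field_simp; ring
    · rw [hpq]; field_simp
      linear_combination (gL t - gH t) * hα
    · field_simp
  have h00 : ∀ t : ℝ, T t 0 0 = (gH t + gL t)/2 * S 0 0 + α * gm t * S 1 0 := by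
    intro t; rw [hT, hP, Matrix.eta_fin_two S, Matrix.mul_fin_two]; simp
  have h01 : ∀ t : ℝ, T t 0 1 = (gH t + gL t)/2 * S 0 1 + α * gm t * S 1 1 := by
    intro t; rw [hT, hP, Matrix.eta_fin_two S, Matrix.mul_fin_two]; simp
  have h10 : ∀ t : ℝ, T t 1 0 = (starRingEnd ℂ) α * gm t * S 0 0 + (gH t + gL t)/2 * S 1 0 := by
    intro t; rw [hT, hP, Matrix.eta_fin_two S, Matrix.mul_fin_two]; simp
  have h11 : ∀ t : ℝ, T t 1 1 = (starRingEnd ℂ) α * gm t * S 0 1 + (gH t + gL t)/2 * S 1 1 := by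
    intro t; rw [hT, hP, Matrix.eta_fin_two S, Matrix.mul_fin_two]; simp
  have key : ∀ t : ℝ, (starRingEnd ℂ) (T t 0 0) * T t 0 1 =
      -(starRingEnd ℂ) ((starRingEnd ℂ) (T t 1 1) * T t 1 0) := by
    intro t
    rw [h00, h01, h10, h11, hgm t]
    simp only [_root_.map_mul, _root_.map_add, map_sub, map_div₀, Complex.conj_conj, map_ofNat]
    linear_combination
      ((((starRingEnd ℂ) (gH t) + (starRingEnd ℂ) (gL t))/2) * ((gH t + gL t)/2) +
        (starRingEnd ℂ) α * α * (((starRingEnd ℂ) (gH t) - (starRingEnd ℂ) (gL t))/2) *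
          ((gH t - gL t)/2)) * hu +
      ((α * (starRingEnd ℂ) (S 0 0) * S 1 1 +
        (starRingEnd ℂ) α * S 0 1 * (starRingEnd ℂ) (S 1 0)) / 2) * (hg t)
  have hint : (∫ t in Set.Ioi (0:ℝ), (starRingEnd ℂ) (T t 0 0) * T t 0 1) =
      -(starRingEnd ℂ) (∫ t in Set.Ioi (0:ℝ), (starRingEnd ℂ) (T t 1 1) * T t 1 0) := by
    simp_rw [key]
    rw [integral_neg, integral_conj]
  rw [hNpp, hNmm, hpq1, hqp1, hint]
  simp [norm_neg, RCLike.norm_conj]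
end

section
/- Under the assumptions y = 0, S unitary, |p/q| = 1, with Z = |2a·conj(b) + ix(e^{−iδ}a² + e^{iδ}conj(b)²)|², the dilepton event numbers satisfy N₊₊ = N₋₋ = (B²/(4Γ²))·(x²/(1+x²) + ζZ/(1+x²)²) and N₊₋ = N₋₊ = (B²/(4Γ²))·((2+x²)/(1+x²) − ζZ/(1+x²)²). -/
open MeasureTheory Matrix Complex

namespace Stmt15Aux
open Set

lemma intg_cexp (c : ℂ) (hc : c.re < 0) :
    IntegrableOn (fun t : ℝ => Complex.exp (c * t)) (Ioi 0) := by
  apply Integrable.mono' (g := fun t : ℝ => Real.exp (-(-c.re) * t))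
  · exact exp_neg_integrableOn_Ioi 0 (by linarith)
  · exact (Complex.continuous_exp.comp (continuous_const.mul Complex.continuous_ofReal)).aestronglyMeasurable
  · filter_upwards with t
    rw [Complex.norm_exp]
    simp

lemma integral_cexp_Ioi (c : ℂ) (hc : c.re < 0) :
    (∫ t in Ioi (0:ℝ), Complex.exp (c * t)) = -c⁻¹ := by
  have hc0 : c ≠ 0 := fun h => by simp [h] at hc
  have hderiv : ∀ t ∈ Ici (0:ℝ), HasDerivAt (fun t : ℝ => Complex.exp (c * t) / c)
      (Complex.exp (c * t)) t := by
    intro t _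
    have h1 : HasDerivAt (fun t : ℝ => c * (t:ℂ)) c t := by
      simpa using (Complex.ofRealCLM.hasDerivAt (x := t)).const_mul c
    simpa [mul_div_cancel_right₀ _ hc0] using (h1.cexp).div_const c
  have htend : Filter.Tendsto (fun t : ℝ => Complex.exp (c * t) / c) Filter.atTop (nhds 0) := by
    rw [tendsto_zero_iff_norm_tendsto_zero]
    simp only [norm_div, Complex.norm_exp]
    have h2 : Filter.Tendsto (fun t : ℝ => (c*t:ℂ).re) Filter.atTop Filter.atBot := by
      simp only [Complex.mul_re, Complex.ofReal_re, Complex.ofReal_im, mul_zero, sub_zero]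
      exact Filter.Tendsto.const_mul_atTop_of_neg hc Filter.tendsto_id
    simpa using (Real.tendsto_exp_atBot.comp h2).div_const ‖c‖
  have := MeasureTheory.integral_Ioi_of_hasDerivAt_of_tendsto' hderiv (intg_cexp c hc) htend
  simp only [Complex.ofReal_zero, mul_zero, Complex.exp_zero] at this
  rw [this]; ring

lemma integral_three (c0 cp cm k0 kp km : ℂ) (h0 : c0.re < 0) (hp : cp.re < 0) (hm : cm.re < 0) :
    (∫ t in Ioi (0:ℝ), (k0 * Complex.exp (c0 * t) + kp * Complex.exp (cp * t)
        + km * Complex.exp (cm * t)))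
      = k0 * (-c0⁻¹) + kp * (-cp⁻¹) + km * (-cm⁻¹) := by
  have i0 := (intg_cexp c0 h0).const_mul k0
  have ip := (intg_cexp cp hp).const_mul kp
  have im := (intg_cexp cm hm).const_mul km
  have i01 : Integrable (fun t : ℝ => k0 * Complex.exp (c0 * t) + kp * Complex.exp (cp * t)) (volume.restrict (Ioi 0)) := i0.add ip
  rw [MeasureTheory.integral_add i01 im, MeasureTheory.integral_add i0 ip,
    integral_const_mul, integral_const_mul, integral_const_mul,
    integral_cexp_Ioi c0 h0, integral_cexp_Ioi cp hp, integral_cexp_Ioi cm hm]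

lemma intg_three (c0 cp cm k0 kp km : ℂ) (h0 : c0.re < 0) (hp : cp.re < 0) (hm : cm.re < 0) :
    IntegrableOn (fun t : ℝ => k0 * Complex.exp (c0 * t) + kp * Complex.exp (cp * t)
        + km * Complex.exp (cm * t)) (Ioi 0) :=
  (((intg_cexp c0 h0).const_mul k0).add ((intg_cexp cp hp).const_mul kp)).add
    ((intg_cexp cm hm).const_mul km)

lemma atoms (mH mL Γ : ℝ) (t : ℝ) :
    Complex.exp (-(Complex.I * mH + (Γ:ℂ) / 2) * t)
        = (Complex.exp (Complex.I * mH * t))⁻¹ * Complex.exp (((-(Γ/2) : ℝ) : ℂ) * t) ∧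
    Complex.exp (-(Complex.I * mL + (Γ:ℂ) / 2) * t)
        = (Complex.exp (Complex.I * mL * t))⁻¹ * Complex.exp (((-(Γ/2) : ℝ) : ℂ) * t) ∧
    Complex.exp ((-(Γ:ℂ)) * t)
        = Complex.exp (((-(Γ/2) : ℝ) : ℂ) * t) * Complex.exp (((-(Γ/2) : ℝ) : ℂ) * t) ∧
    Complex.exp ((Complex.I * ((mH:ℂ) - mL) - Γ) * t)
        = Complex.exp (Complex.I * mH * t) * (Complex.exp (Complex.I * mL * t))⁻¹ *
          (Complex.exp (((-(Γ/2) : ℝ) : ℂ) * t) * Complex.exp (((-(Γ/2) : ℝ) : ℂ) * t)) ∧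
    Complex.exp ((-(Complex.I * ((mH:ℂ) - mL)) - Γ) * t)
        = (Complex.exp (Complex.I * mH * t))⁻¹ * Complex.exp (Complex.I * mL * t) *
          (Complex.exp (((-(Γ/2) : ℝ) : ℂ) * t) * Complex.exp (((-(Γ/2) : ℝ) : ℂ) * t)) ∧
    (starRingEnd ℂ) (Complex.exp (Complex.I * mH * t)) = (Complex.exp (Complex.I * mH * t))⁻¹ ∧
    (starRingEnd ℂ) (Complex.exp (Complex.I * mL * t)) = (Complex.exp (Complex.I * mL * t))⁻¹ ∧
    (starRingEnd ℂ) (Complex.exp (((-(Γ/2) : ℝ) : ℂ) * t)) = Complex.exp (((-(Γ/2) : ℝ) : ℂ) * t) := by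
  refine ⟨?_, ?_, ?_, ?_, ?_, ?_, ?_, ?_⟩
  · rw [← Complex.exp_neg, ← Complex.exp_add]; congr 1; push_cast; ring
  · rw [← Complex.exp_neg, ← Complex.exp_add]; congr 1; push_cast; ring
  · rw [← Complex.exp_add]; congr 1; push_cast; ring
  · rw [← Complex.exp_neg, ← Complex.exp_add, ← Complex.exp_add, ← Complex.exp_add]
    congr 1; push_cast; ring
  · rw [← Complex.exp_neg, ← Complex.exp_add, ← Complex.exp_add, ← Complex.exp_add]
    congr 1; push_cast; ring
  · rw [← Complex.exp_conj, ← Complex.exp_neg]; congr 1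
    simp only [_root_.map_mul, Complex.conj_I, Complex.conj_ofReal]; ring
  · rw [← Complex.exp_conj, ← Complex.exp_neg]; congr 1
    simp only [_root_.map_mul, Complex.conj_I, Complex.conj_ofReal]; ring
  · rw [← Complex.exp_conj]; congr 1
    simp only [_root_.map_mul, Complex.conj_ofReal]

lemma int_eval (mH mL Γ : ℝ) (hΓ : 0 < Γ) (k0 kp km : ℂ) (f : ℝ → ℂ)
    (hf : ∀ t : ℝ, f t = k0 * Complex.exp ((-(Γ:ℂ)) * t)
      + kp * Complex.exp ((Complex.I * ((mH:ℂ) - mL) - Γ) * t)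
      + km * Complex.exp ((-(Complex.I * ((mH:ℂ) - mL)) - Γ) * t)) :
    IntegrableOn f (Ioi 0) ∧
    (∫ t in Ioi (0:ℝ), f t) = k0 * (Γ:ℂ)⁻¹ + kp * ((Γ:ℂ) - Complex.I * ((mH:ℂ) - mL))⁻¹
      + km * ((Γ:ℂ) + Complex.I * ((mH:ℂ) - mL))⁻¹ := by
  have h0 : ((-(Γ:ℂ))).re < 0 := by simp [hΓ]
  have hp : ((Complex.I * ((mH:ℂ) - mL) - Γ)).re < 0 := by
    simp [Complex.sub_re, Complex.mul_re, hΓ]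
  have hm : ((-(Complex.I * ((mH:ℂ) - mL)) - Γ)).re < 0 := by
    simp [Complex.sub_re, Complex.mul_re, hΓ]
  have hfe : f = fun t : ℝ => k0 * Complex.exp ((-(Γ:ℂ)) * t)
      + kp * Complex.exp ((Complex.I * ((mH:ℂ) - mL) - Γ) * t)
      + km * Complex.exp ((-(Complex.I * ((mH:ℂ) - mL)) - Γ) * t) := funext hf
  constructor
  · rw [hfe]; exact intg_three _ _ _ _ _ _ h0 hp hm
  · rw [hfe, integral_three _ _ _ _ _ _ h0 hp hm]
    rw [show -(-(Γ:ℂ))⁻¹ = (Γ:ℂ)⁻¹ by rw [inv_neg, neg_neg],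
      show -(Complex.I * ((mH:ℂ) - mL) - Γ)⁻¹ = ((Γ:ℂ) - Complex.I * ((mH:ℂ) - mL))⁻¹ by
        rw [← inv_neg, neg_sub],
      show -(-(Complex.I * ((mH:ℂ) - mL)) - Γ)⁻¹ = ((Γ:ℂ) + Complex.I * ((mH:ℂ) - mL))⁻¹ by
        rw [← inv_neg]; ring_nf]

lemma normsq_re (z : ℂ) : ‖z‖ ^ 2 = ((starRingEnd ℂ) z * z).re := by
  rw [mul_comm, Complex.mul_conj]
  simp [Complex.normSq_eq_norm_sq]
  norm_cast


set_option maxHeartbeats 1000000 in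
lemma Tentries (p q a b gH gL eφ : ℂ) (hp : p ≠ 0) (hq : q ≠ 0)
    (R : Matrix (Fin 2) (Fin 2) ℂ)
    (hR : R = !![p, p; q, -q] * !![gH, 0; 0, gL] * (!![p, p; q, -q])⁻¹ *
      (eφ • !![a, b; -(starRingEnd ℂ) b, (starRingEnd ℂ) a])) :
    R 0 0 = eφ * ((gH + gL)/2 * a - (p/q) * ((gH - gL)/2) * (starRingEnd ℂ) b) ∧
    R 0 1 = eφ * ((gH + gL)/2 * b + (p/q) * ((gH - gL)/2) * (starRingEnd ℂ) a) ∧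
    R 1 0 = eφ * ((q/p) * ((gH - gL)/2) * a - (gH + gL)/2 * (starRingEnd ℂ) b) ∧
    R 1 1 = eφ * ((q/p) * ((gH - gL)/2) * b + (gH + gL)/2 * (starRingEnd ℂ) a) := by
  have hMinv : (!![p, p; q, -q] : Matrix (Fin 2) (Fin 2) ℂ)⁻¹
      = !![(2*p)⁻¹, (2*q)⁻¹; (2*p)⁻¹, -(2*q)⁻¹] := by
    apply Matrix.inv_eq_right_inv
    ext i j
    fin_cases i <;> fin_cases j <;>
      simp [Matrix.mul_apply, Fin.sum_univ_two] <;> field_simp <;> ring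
  rw [hMinv] at hR
  subst hR
  refine ⟨?_, ?_, ?_, ?_⟩ <;>
  · simp only [Matrix.mul_fin_two, Matrix.mul_apply, Fin.sum_univ_two, Matrix.of_apply, Matrix.smul_apply, smul_eq_mul, Matrix.cons_val',
      Matrix.cons_val_zero, Matrix.cons_val_one, Matrix.head_cons, Matrix.head_fin_const,
      Matrix.empty_val', Matrix.cons_val_fin_one]
    field_simp; ring

end Stmt15Aux

open Stmt15Aux Set in
set_option maxHeartbeats 2000000 in
theorem stmt_15 (mH mL Γ x : ℝ) (hΓ : 0 < Γ) (hx : x = (mH - mL) / Γ)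
    (δ φ : ℝ) (a b : ℂ) (hab : ‖a‖ ^ 2 + ‖b‖ ^ 2 = 1)
    (p q : ℂ) (hq : q ≠ 0) (hpq : p = Complex.exp (Complex.I * δ) * q)
    (hnorm : ‖p‖ ^ 2 + ‖q‖ ^ 2 = 1)
    (gH gL gp gm : ℝ → ℂ)
    (hgH : ∀ t, gH t = Complex.exp (-(Complex.I * mH + Γ / 2) * t))
    (hgL : ∀ t, gL t = Complex.exp (-(Complex.I * mL + Γ / 2) * t))
    (hgp : ∀ t, gp t = (gH t + gL t) / 2)
    (hgm : ∀ t, gm t = (gH t - gL t) / 2)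
    (S M : Matrix (Fin 2) (Fin 2) ℂ)
    (hS : S = Complex.exp (Complex.I * φ) •
      !![a, b; -(starRingEnd ℂ) b, (starRingEnd ℂ) a])
    (hM : M = !![p, p; q, -q])
    (T : ℝ → Matrix (Fin 2) (Fin 2) ℂ)
    (hT : ∀ t, T t = M * Matrix.diagonal ![gH t, gL t] * M⁻¹ * S)
    (B ζ Ip Im Z : ℝ) (hB : 0 < B)
    (hIp : Ip = ∫ t in Set.Ioi (0 : ℝ), ‖gp t‖ ^ 2)
    (hIm : Im = ∫ t in Set.Ioi (0 : ℝ), ‖gm t‖ ^ 2)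
    (hZ : Z = ‖2 * a * (starRingEnd ℂ) b + Complex.I * (x : ℂ) *
      (Complex.exp (-(Complex.I * δ)) * a ^ 2 +
        Complex.exp (Complex.I * δ) * ((starRingEnd ℂ) b) ^ 2)‖ ^ 2)
    (Npp Nmm Npm Nmp : ℝ)
    (hNpp : Npp = B ^ 2 / (2 * Γ) * ‖p / q‖ ^ 2 * Im +
      ζ * B ^ 2 *
        ‖∫ t in Set.Ioi (0 : ℝ), (starRingEnd ℂ) (T t 0 0) * T t 0 1‖ ^ 2)
    (hNmm : Nmm = B ^ 2 / (2 * Γ) * ‖q / p‖ ^ 2 * Im +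
      ζ * B ^ 2 *
        ‖∫ t in Set.Ioi (0 : ℝ), (starRingEnd ℂ) (T t 1 1) * T t 1 0‖ ^ 2)
    (hNpm : Npm = B ^ 2 / (2 * Γ) * Ip +
      ζ * B ^ 2 *
        ((∫ t in Set.Ioi (0 : ℝ), (starRingEnd ℂ) (T t 0 0) * T t 0 1) *
          (∫ t in Set.Ioi (0 : ℝ), (starRingEnd ℂ) (T t 1 1) * T t 1 0)).re)
    (hNmp : Nmp = Npm) :
    Npp = B ^ 2 / (4 * Γ ^ 2) *
        (x ^ 2 / (1 + x ^ 2) + ζ * Z / (1 + x ^ 2) ^ 2) ∧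
    Nmm = B ^ 2 / (4 * Γ ^ 2) *
        (x ^ 2 / (1 + x ^ 2) + ζ * Z / (1 + x ^ 2) ^ 2) ∧
    Npm = B ^ 2 / (4 * Γ ^ 2) *
        ((2 + x ^ 2) / (1 + x ^ 2) - ζ * Z / (1 + x ^ 2) ^ 2) ∧
    Nmp = B ^ 2 / (4 * Γ ^ 2) *
        ((2 + x ^ 2) / (1 + x ^ 2) - ζ * Z / (1 + x ^ 2) ^ 2) := by
  subst hpq
  have hΓ0 : Γ ≠ 0 := ne_of_gt hΓ
  have hΓc : (Γ:ℂ) ≠ 0 := by exact_mod_cast hΓ0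
  have hx2 : (1:ℝ) + x ^ 2 ≠ 0 := by positivity
  have hx2c : (1:ℂ) + (x:ℂ) ^ 2 ≠ 0 := by
    have := Complex.ofReal_ne_zero.mpr hx2; push_cast at this; exact this
  have hΔr : mH - mL = x * Γ := by rw [hx]; field_simp
  have hΔc : ((mH:ℂ) - mL) = (x:ℂ) * Γ := by
    have := congrArg (Complex.ofReal) hΔr; push_cast at this; exact this
  have heδ0 : Complex.exp (Complex.I * δ) ≠ 0 := Complex.exp_ne_zero _
  have heφ0 : Complex.exp (Complex.I * φ) ≠ 0 := Complex.exp_ne_zero _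
  have hp0 : Complex.exp (Complex.I * δ) * q ≠ 0 := mul_ne_zero heδ0 hq
  have cδ : (starRingEnd ℂ) (Complex.exp (Complex.I * δ)) = (Complex.exp (Complex.I * δ))⁻¹ := by
    rw [← Complex.exp_conj, ← Complex.exp_neg]; congr 1
    simp only [_root_.map_mul, Complex.conj_I, Complex.conj_ofReal]; ring
  have cφ : (starRingEnd ℂ) (Complex.exp (Complex.I * φ)) = (Complex.exp (Complex.I * φ))⁻¹ := by
    rw [← Complex.exp_conj, ← Complex.exp_neg]; congr 1
    simp only [_root_.map_mul, Complex.conj_I, Complex.conj_ofReal]; ring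
  have hmδ : Complex.exp (-(Complex.I * δ)) = (Complex.exp (Complex.I * δ))⁻¹ := Complex.exp_neg _
  have cδ' : (starRingEnd ℂ) (Complex.exp (-(Complex.I * δ))) = Complex.exp (Complex.I * δ) := by
    rw [hmδ, map_inv₀, cδ, inv_inv]
  have hpq1 : Complex.exp (Complex.I * δ) * q / q = Complex.exp (Complex.I * δ) := by
    rw [mul_div_assoc, div_self hq, mul_one]
  have hqp1 : q / (Complex.exp (Complex.I * δ) * q) = (Complex.exp (Complex.I * δ))⁻¹ := by
    field_simp
  have hnpq : ‖Complex.exp (Complex.I * δ) * q / q‖ = 1 := by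
    rw [hpq1, Complex.norm_exp]; simp
  have hnqp : ‖q / (Complex.exp (Complex.I * δ) * q)‖ = 1 := by
    rw [hqp1, norm_inv, Complex.norm_exp]; simp
  have hdiag : ∀ t : ℝ, Matrix.diagonal ![gH t, gL t] = !![gH t, 0; 0, gL t] := by
    intro t; ext i j; fin_cases i <;> fin_cases j <;> simp [Matrix.diagonal_apply]
  have hTe : ∀ t : ℝ,
      T t 0 0 = Complex.exp (Complex.I * φ) * ((gH t + gL t)/2 * a -
        Complex.exp (Complex.I * δ) * ((gH t - gL t)/2) * (starRingEnd ℂ) b) ∧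
      T t 0 1 = Complex.exp (Complex.I * φ) * ((gH t + gL t)/2 * b +
        Complex.exp (Complex.I * δ) * ((gH t - gL t)/2) * (starRingEnd ℂ) a) ∧
      T t 1 0 = Complex.exp (Complex.I * φ) * ((Complex.exp (Complex.I * δ))⁻¹ * ((gH t - gL t)/2) * a -
        (gH t + gL t)/2 * (starRingEnd ℂ) b) ∧
      T t 1 1 = Complex.exp (Complex.I * φ) * ((Complex.exp (Complex.I * δ))⁻¹ * ((gH t - gL t)/2) * b +
        (gH t + gL t)/2 * (starRingEnd ℂ) a) := by
    intro t
    have hR : T t = !![Complex.exp (Complex.I * δ) * q, Complex.exp (Complex.I * δ) * q; q, -q] *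
        !![gH t, 0; 0, gL t] *
        (!![Complex.exp (Complex.I * δ) * q, Complex.exp (Complex.I * δ) * q; q, -q])⁻¹ *
        (Complex.exp (Complex.I * φ) • !![a, b; -(starRingEnd ℂ) b, (starRingEnd ℂ) a]) := by
      rw [hT t, hM, hS, hdiag t]
    have := Tentries (Complex.exp (Complex.I * δ) * q) q a b (gH t) (gL t)
      (Complex.exp (Complex.I * φ)) hp0 hq (T t) hR
    rw [hpq1, hqp1] at this
    exact this
  -- pointwise integrand identities
  have hfa : ∀ t : ℝ, (starRingEnd ℂ) (gm t) * gm t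
      = (1/2 : ℂ) * Complex.exp ((-(Γ:ℂ)) * t)
        + (-(1/4) : ℂ) * Complex.exp ((Complex.I * ((mH:ℂ) - mL) - Γ) * t)
        + (-(1/4) : ℂ) * Complex.exp ((-(Complex.I * ((mH:ℂ) - mL)) - Γ) * t) := by
    intro t
    obtain ⟨e1, e2, e3, e4, e5, cu, cv, cw⟩ := atoms mH mL Γ t
    rw [hgm t, hgH t, hgL t, e1, e2]
    simp only [_root_.map_mul, map_sub, map_add, map_div₀, map_inv₀, map_ofNat, cu, cv, cw]
    rw [e3, e4, e5]
    have hu0 : Complex.exp (Complex.I * mH * t) ≠ 0 := Complex.exp_ne_zero _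
    have hv0 : Complex.exp (Complex.I * mL * t) ≠ 0 := Complex.exp_ne_zero _
    field_simp
    ring
  have hfb : ∀ t : ℝ, (starRingEnd ℂ) (gp t) * gp t
      = (1/2 : ℂ) * Complex.exp ((-(Γ:ℂ)) * t)
        + ((1/4) : ℂ) * Complex.exp ((Complex.I * ((mH:ℂ) - mL) - Γ) * t)
        + ((1/4) : ℂ) * Complex.exp ((-(Complex.I * ((mH:ℂ) - mL)) - Γ) * t) := by
    intro t
    obtain ⟨e1, e2, e3, e4, e5, cu, cv, cw⟩ := atoms mH mL Γ t
    rw [hgp t, hgH t, hgL t, e1, e2]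
    simp only [_root_.map_mul, map_sub, map_add, map_div₀, map_inv₀, map_ofNat, cu, cv, cw]
    rw [e3, e4, e5]
    have hu0 : Complex.exp (Complex.I * mH * t) ≠ 0 := Complex.exp_ne_zero _
    have hv0 : Complex.exp (Complex.I * mL * t) ≠ 0 := Complex.exp_ne_zero _
    field_simp
    ring
  have hfc : ∀ t : ℝ, (starRingEnd ℂ) (T t 0 0) * T t 0 1
      = (0 : ℂ) * Complex.exp ((-(Γ:ℂ)) * t)
        + ((starRingEnd ℂ) a * b/2 - (Complex.exp (Complex.I * δ) * ((starRingEnd ℂ) a)^2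
            + (Complex.exp (Complex.I * δ))⁻¹ * b^2)/4)
          * Complex.exp ((Complex.I * ((mH:ℂ) - mL) - Γ) * t)
        + ((starRingEnd ℂ) a * b/2 + (Complex.exp (Complex.I * δ) * ((starRingEnd ℂ) a)^2
            + (Complex.exp (Complex.I * δ))⁻¹ * b^2)/4)
          * Complex.exp ((-(Complex.I * ((mH:ℂ) - mL)) - Γ) * t) := by
    intro t
    obtain ⟨e1, e2, e3, e4, e5, cu, cv, cw⟩ := atoms mH mL Γ t
    rw [(hTe t).1, (hTe t).2.1, hgH t, hgL t, e1, e2]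
    simp only [_root_.map_mul, map_sub, map_add, map_div₀, map_inv₀, map_ofNat,
      Complex.conj_conj, cu, cv, cw, cφ, cδ, inv_inv]
    rw [e3, e4, e5]
    have hu0 : Complex.exp (Complex.I * mH * t) ≠ 0 := Complex.exp_ne_zero _
    have hv0 : Complex.exp (Complex.I * mL * t) ≠ 0 := Complex.exp_ne_zero _
    field_simp
    ring
  have hfd : ∀ t : ℝ, (starRingEnd ℂ) (T t 1 1) * T t 1 0
      = (0 : ℂ) * Complex.exp ((-(Γ:ℂ)) * t)
        + (-(a * (starRingEnd ℂ) b)/2 - (Complex.exp (Complex.I * δ) * ((starRingEnd ℂ) b)^2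
            + (Complex.exp (Complex.I * δ))⁻¹ * a^2)/4)
          * Complex.exp ((Complex.I * ((mH:ℂ) - mL) - Γ) * t)
        + (-(a * (starRingEnd ℂ) b)/2 + (Complex.exp (Complex.I * δ) * ((starRingEnd ℂ) b)^2
            + (Complex.exp (Complex.I * δ))⁻¹ * a^2)/4)
          * Complex.exp ((-(Complex.I * ((mH:ℂ) - mL)) - Γ) * t) := by
    intro t
    obtain ⟨e1, e2, e3, e4, e5, cu, cv, cw⟩ := atoms mH mL Γ t
    rw [(hTe t).2.2.2, (hTe t).2.2.1, hgH t, hgL t, e1, e2]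
    simp only [_root_.map_mul, map_sub, map_add, map_div₀, map_inv₀, map_ofNat,
      Complex.conj_conj, cu, cv, cw, cφ, cδ, inv_inv]
    rw [e3, e4, e5]
    have hu0 : Complex.exp (Complex.I * mH * t) ≠ 0 := Complex.exp_ne_zero _
    have hv0 : Complex.exp (Complex.I * mL * t) ≠ 0 := Complex.exp_ne_zero _
    field_simp
    ring
  obtain ⟨ia, va⟩ := int_eval mH mL Γ hΓ _ _ _ (fun t => (starRingEnd ℂ) (gm t) * gm t) hfa
  obtain ⟨ib, vb⟩ := int_eval mH mL Γ hΓ _ _ _ (fun t => (starRingEnd ℂ) (gp t) * gp t) hfb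
  obtain ⟨ic, vc⟩ := int_eval mH mL Γ hΓ _ _ _
    (fun t => (starRingEnd ℂ) (T t 0 0) * T t 0 1) hfc
  obtain ⟨id', vd⟩ := int_eval mH mL Γ hΓ _ _ _
    (fun t => (starRingEnd ℂ) (T t 1 1) * T t 1 0) hfd
  -- inverse evaluations
  have hGK : (Γ:ℂ) * (1 + (x:ℂ)^2) ≠ 0 := mul_ne_zero hΓc hx2c
  have h1 : ((Γ:ℂ) - Complex.I * ((x:ℂ) * Γ)) * (1 + Complex.I * x) = (Γ:ℂ) * (1 + (x:ℂ)^2) := by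
    linear_combination (-(x:ℂ)^2 * (Γ:ℂ)) * Complex.I_sq
  have h2 : ((Γ:ℂ) + Complex.I * ((x:ℂ) * Γ)) * (1 - Complex.I * x) = (Γ:ℂ) * (1 + (x:ℂ)^2) := by
    linear_combination (-(x:ℂ)^2 * (Γ:ℂ)) * Complex.I_sq
  have hA1 : ((Γ:ℂ) - Complex.I * ((x:ℂ) * Γ)) ≠ 0 := by
    intro h; rw [h, zero_mul] at h1; exact hGK h1.symm
  have hA2 : ((Γ:ℂ) + Complex.I * ((x:ℂ) * Γ)) ≠ 0 := by
    intro h; rw [h, zero_mul] at h2; exact hGK h2.symm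
  have hAp : ((Γ:ℂ) - Complex.I * ((x:ℂ) * Γ))⁻¹ = (1 + Complex.I * x) / ((Γ:ℂ) * (1 + (x:ℂ)^2)) := by
    rw [eq_div_iff hGK, inv_mul_eq_iff_eq_mul₀ hA1]
    linear_combination -h1
  have hAm : ((Γ:ℂ) + Complex.I * ((x:ℂ) * Γ))⁻¹ = (1 - Complex.I * x) / ((Γ:ℂ) * (1 + (x:ℂ)^2)) := by
    rw [eq_div_iff hGK, inv_mul_eq_iff_eq_mul₀ hA2]
    linear_combination -h2
  rw [hΔc, hAp, hAm] at va vb vc vd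
  -- values
  have va2 : (∫ t in Ioi (0:ℝ), (starRingEnd ℂ) (gm t) * gm t)
      = ((x^2/(2*Γ*(1+x^2)) : ℝ) : ℂ) := by
    rw [va]; push_cast; field_simp; ring
  have vb2 : (∫ t in Ioi (0:ℝ), (starRingEnd ℂ) (gp t) * gp t)
      = (((2+x^2)/(2*Γ*(1+x^2)) : ℝ) : ℂ) := by
    rw [vb]; push_cast; field_simp; ring
  have vc2 : (∫ t in Ioi (0:ℝ), (starRingEnd ℂ) (T t 0 0) * T t 0 1)
      = ((2*Γ*(1+x^2) : ℝ) : ℂ)⁻¹ * (starRingEnd ℂ) (2 * a * (starRingEnd ℂ) b +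
          Complex.I * (x : ℂ) * (Complex.exp (-(Complex.I * δ)) * a ^ 2 +
            Complex.exp (Complex.I * δ) * ((starRingEnd ℂ) b) ^ 2)) := by
    rw [vc]
    simp only [_root_.map_mul, map_add, map_ofNat, map_pow, Complex.conj_conj,
      Complex.conj_I, Complex.conj_ofReal, cδ, cδ']
    push_cast
    field_simp
    ring
  have vd2 : (∫ t in Ioi (0:ℝ), (starRingEnd ℂ) (T t 1 1) * T t 1 0)
      = -(((2*Γ*(1+x^2) : ℝ) : ℂ)⁻¹ * (2 * a * (starRingEnd ℂ) b +
          Complex.I * (x : ℂ) * (Complex.exp (-(Complex.I * δ)) * a ^ 2 +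
            Complex.exp (Complex.I * δ) * ((starRingEnd ℂ) b) ^ 2))) := by
    rw [vd, hmδ]
    push_cast
    field_simp
    ring
  -- real integrals
  have hImv : Im = x^2/(2*Γ*(1+x^2)) := by
    rw [hIm]
    simp only [normsq_re]
    rw [show (∫ t in Ioi (0:ℝ), ((starRingEnd ℂ) (gm t) * gm t).re)
        = (∫ t in Ioi (0:ℝ), (starRingEnd ℂ) (gm t) * gm t).re by
      have := integral_re ia
      simpa using this]
    rw [va2, Complex.ofReal_re]
  have hIpv : Ip = (2+x^2)/(2*Γ*(1+x^2)) := by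
    rw [hIp]
    simp only [normsq_re]
    rw [show (∫ t in Ioi (0:ℝ), ((starRingEnd ℂ) (gp t) * gp t).re)
        = (∫ t in Ioi (0:ℝ), (starRingEnd ℂ) (gp t) * gp t).re by
      have := integral_re ib
      simpa using this]
    rw [vb2, Complex.ofReal_re]
  -- norms
  have hxpos : (0:ℝ) < 2*Γ*(1+x^2) := by positivity
  have hn3 : ‖∫ t in Ioi (0:ℝ), (starRingEnd ℂ) (T t 0 0) * T t 0 1‖^2
      = Z/(2*Γ*(1+x^2))^2 := by
    rw [vc2, norm_mul, norm_inv, Complex.norm_real, RCLike.norm_conj, Real.norm_eq_abs,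
      abs_of_pos hxpos, mul_pow, inv_pow, ← hZ]
    field_simp
  have hn4 : ‖∫ t in Ioi (0:ℝ), (starRingEnd ℂ) (T t 1 1) * T t 1 0‖^2
      = Z/(2*Γ*(1+x^2))^2 := by
    rw [vd2, norm_neg, norm_mul, norm_inv, Complex.norm_real, Real.norm_eq_abs,
      abs_of_pos hxpos, mul_pow, inv_pow, ← hZ]
    field_simp
  have hprod : ((∫ t in Ioi (0:ℝ), (starRingEnd ℂ) (T t 0 0) * T t 0 1) *
      (∫ t in Ioi (0:ℝ), (starRingEnd ℂ) (T t 1 1) * T t 1 0)).re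
      = -(Z/(2*Γ*(1+x^2))^2) := by
    rw [vc2, vd2]
    have hcw : (starRingEnd ℂ) (2 * a * (starRingEnd ℂ) b +
          Complex.I * (x : ℂ) * (Complex.exp (-(Complex.I * δ)) * a ^ 2 +
            Complex.exp (Complex.I * δ) * ((starRingEnd ℂ) b) ^ 2)) *
        (2 * a * (starRingEnd ℂ) b +
          Complex.I * (x : ℂ) * (Complex.exp (-(Complex.I * δ)) * a ^ 2 +
            Complex.exp (Complex.I * δ) * ((starRingEnd ℂ) b) ^ 2)) = ((Z:ℝ):ℂ) := by
      rw [mul_comm, Complex.mul_conj, hZ]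
      push_cast
      simp [Complex.normSq_eq_norm_sq]
    rw [show (((2*Γ*(1+x^2) : ℝ) : ℂ)⁻¹ * (starRingEnd ℂ) (2 * a * (starRingEnd ℂ) b +
          Complex.I * (x : ℂ) * (Complex.exp (-(Complex.I * δ)) * a ^ 2 +
            Complex.exp (Complex.I * δ) * ((starRingEnd ℂ) b) ^ 2))) *
        (-(((2*Γ*(1+x^2) : ℝ) : ℂ)⁻¹ * (2 * a * (starRingEnd ℂ) b +
          Complex.I * (x : ℂ) * (Complex.exp (-(Complex.I * δ)) * a ^ 2 +
            Complex.exp (Complex.I * δ) * ((starRingEnd ℂ) b) ^ 2))))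
        = -(((2*Γ*(1+x^2) : ℝ) : ℂ)⁻¹ * ((2*Γ*(1+x^2) : ℝ) : ℂ)⁻¹ *
            ((starRingEnd ℂ) (2 * a * (starRingEnd ℂ) b +
          Complex.I * (x : ℂ) * (Complex.exp (-(Complex.I * δ)) * a ^ 2 +
            Complex.exp (Complex.I * δ) * ((starRingEnd ℂ) b) ^ 2)) *
          (2 * a * (starRingEnd ℂ) b +
          Complex.I * (x : ℂ) * (Complex.exp (-(Complex.I * δ)) * a ^ 2 +
            Complex.exp (Complex.I * δ) * ((starRingEnd ℂ) b) ^ 2)))) by ring]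
    rw [hcw]
    rw [show (-(((2*Γ*(1+x^2) : ℝ) : ℂ)⁻¹ * ((2*Γ*(1+x^2) : ℝ) : ℂ)⁻¹ * ((Z:ℝ):ℂ)))
        = ((-(Z/(2*Γ*(1+x^2))^2) : ℝ) : ℂ) by
      push_cast
      rw [show ((2:ℂ)*Γ*(1+(x:ℂ)^2))^2 = (2*Γ*(1+(x:ℂ)^2)) * (2*Γ*(1+(x:ℂ)^2)) from sq _]
      field_simp]
    rw [Complex.ofReal_re]
  refine ⟨?_, ?_, ?_, ?_⟩
  · rw [hNpp, hnpq, hImv, hn3]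
    field_simp
    ring
  · rw [hNmm, hnqp, hImv, hn4]
    field_simp
    ring
  · rw [hNpm, hIpv, hprod]
    field_simp
    ring
  · rw [hNmp, hNpm, hIpv, hprod]
    field_simp
    ring
end
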